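/- Let A be a unital C*-algebra with triple product {x,y,z} = (xy*z + zy*x)/2, and let P : A → A be a contractive linear projection satisfying the conditional expectation formulas P{Px,Py,Pz} = P{Px,y,Pz} = P{x,Py,Pz} for all x,y,z ∈ A, and such that the induced product [x,y,z] := P{x,y,z} satisfies the Jordan triple identity [a,b,[x,y,z]] = [[a,b,x],y,z] − [x,[b,a,y],z] + [x,y,[a,b,z]] for all a,b,x,y,z in the range of P. Suppose u lies in the range of P and satisfies P{u,u,u} = u and P{u,u,x} = x for all x in the range of P (i.e., u is a unitary tripotent of the JB*-triple P(A)). Then P(1) = P(uu*u*u) and P(1) = P((uu* + u*u)/2). Moreover, if u is a projection of A (u = u*, u² = u), then P(1) = u. -/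
import Mathlib


variable {A : Type*} [CStarAlgebra A]

/-- The Jordan triple product `{x,y,z} = (xy*z + zy*x)/2` of a C*-algebra. -/
noncomputable def tp (x y z : A) : A := (2:ℂ)⁻¹ • (x * star y * z + z * star y * x)

/-- Let `P` be a contractive linear projection on a unital
C*-algebra `A` satisfying the conditional expectation formulas, such that the
induced product `[x,y,z] = P{x,y,z}` satisfies the Jordan triple identity on
the range of `P`.  If `u ∈ P(A)` is a unitary tripotent of the JB*-triple
`P(A)` (i.e. `P{u,u,u} = u` and `P{u,u,x} = x` for every `x ∈ P(A)`), then
`P1 = P(uu*u*u)` and `P1 = P(u∘u*) = P((uu* + u*u)/2)`.  Moreover, if `u` is a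
projection of `A`, then `P1 = u`. -/
theorem stmt_9 (P : A →ₗ[ℂ] A)
    (hproj : ∀ x, P (P x) = P x)
    (hcontr : ∀ x, ‖P x‖ ≤ ‖x‖)
    (hce1 : ∀ x y z : A, P (tp (P x) (P y) (P z)) = P (tp (P x) y (P z)))
    (hce2 : ∀ x y z : A, P (tp (P x) (P y) (P z)) = P (tp x (P y) (P z)))
    (hJordan : ∀ a b x y z : A, P a = a → P b = b → P x = x → P y = y → P z = z →
      P (tp a b (P (tp x y z)))
        = P (tp (P (tp a b x)) y z) - P (tp x (P (tp b a y)) z)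
          + P (tp x y (P (tp a b z))))
    (u : A) (hu : P u = u)
    (hutrip : P (tp u u u) = u)
    (hunitary : ∀ x : A, P x = x → P (tp u u x) = x) :
    P 1 = P (u * star u * star u * u) ∧
    P 1 = P ((2:ℂ)⁻¹ • (u * star u + star u * u)) ∧
    (u = star u → u * u = u → P 1 = u) := by
  have half_two : ∀ x : A, (2:ℂ)⁻¹ • (x + x) = x := by
    intro x
    rw [← two_smul ℂ x, smul_smul]
    norm_num
  have tpcomm : ∀ x y z : A, tp x y z = tp z y x := by
    intro x y z; simp [tp, add_comm]
  have hPe : P (P 1) = P 1 := hproj 1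
  have h1 : P (tp u u (P 1)) = P 1 := hunitary (P 1) hPe
  have h1' : P (tp (P 1) u u) = P 1 := by rw [tpcomm]; exact h1
  have claim2 : P 1 = P ((2:ℂ)⁻¹ • (u * star u + star u * u)) := by
    have h2 := hce2 1 u u
    rw [hu] at h2
    have h3 : tp (1:A) u u = (2:ℂ)⁻¹ • (u * star u + star u * u) := by
      simp [tp, add_comm]
    rw [h3] at h2
    rw [← h2, h1']
  have hq : P (tp u (P 1) u) = P (u * u) := by
    have h2 := hce1 u 1 u
    rw [hu] at h2
    have h3 : tp u (1:A) u = u * u := by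
      simp only [tp, star_one, mul_one]
      exact half_two _
    rw [h3] at h2
    exact h2
  have hJ := hJordan (P 1) u u u u hPe hu hu hu hu
  rw [hutrip, tpcomm (P 1) u u, h1] at hJ
  rw [h1', h1] at hJ
  have hT : P (tp u (P (tp u (P 1) u)) u) = P 1 := by
    rw [sub_add_eq_add_sub, eq_sub_iff_add_eq] at hJ
    exact add_left_cancel hJ
  rw [hq] at hT
  have h4 := hce1 u (u * u) u
  rw [hu] at h4
  have h5 : tp u (u * u) u = u * star u * star u * u := by
    simp only [tp, star_mul]
    rw [half_two]
    noncomm_ring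
  rw [h5] at h4
  have claim1 : P 1 = P (u * star u * star u * u) := by rw [← h4, hT]
  refine ⟨claim1, claim2, fun hs hid => ?_⟩
  rw [claim2, ← hs, hid, half_two, hu]
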